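/- Let α ∈ (0,1], β > 0, t ≥ 0, and define G̃(s) = exp(β t (1+s)^α) for s ≥ 0. Then for all s⁻, s⁺ ≥ 0 with s⁻ > 0, s = s⁻ + s⁺ and s⁻ ≤ s⁺, one has |G̃(s) − G̃(s⁺)| ≤ 2 α β t (1+s⁺)^α (1 − s⁺/s) · G̃(s⁻)^{ε(α, s⁺/s⁻)} · G̃(s⁺), where ε(α,u) = (1+u)^α − u^α. -/

import Mathlib

/-- For a concave difference: `(y+c)^α - y^α ≤ (x+c)^α - x^α` when `0 ≤ x ≤ y`, `0 ≤ c`. -/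
lemma rpow_diff_anti {α : ℝ} (hα0 : 0 ≤ α) (hα1 : α ≤ 1) {x y c : ℝ}
    (hx : 0 ≤ x) (hxy : x ≤ y) (hc : 0 ≤ c) :
    (y + c) ^ α - y ^ α ≤ (x + c) ^ α - x ^ α := by
  rcases eq_or_lt_of_le hc with rfl | hc
  · simp
  rcases eq_or_lt_of_le hxy with rfl | hxy
  · simp
  have hy : 0 ≤ y := hx.trans hxy.le
  have hd : 0 < y + c - x := by linarith
  set θ := c / (y + c - x) with hθdef
  have hθ0 : 0 ≤ θ := div_nonneg hc.le hd.le
  have hθ1 : θ ≤ 1 := by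
    rw [div_le_one hd]; linarith
  have hconc := Real.concaveOn_rpow hα0 hα1
  have hmx : x ∈ Set.Ici (0:ℝ) := hx
  have hmyc : y + c ∈ Set.Ici (0:ℝ) := by simp only [Set.mem_Ici]; linarith
  have hθc : θ * (y + c - x) = c := div_mul_cancel₀ c hd.ne'
  have e1 : (1 - θ) * x + θ * (y + c) = x + c := by linear_combination hθc
  have e2 : θ * x + (1 - θ) * (y + c) = y := by linear_combination -hθc
  have h1 := hconc.2 hmx hmyc (show (0:ℝ) ≤ 1 - θ by linarith) hθ0
    (show (1 - θ) + θ = 1 by ring)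
  have h2 := hconc.2 hmx hmyc hθ0 (show (0:ℝ) ≤ 1 - θ by linarith)
    (show θ + (1 - θ) = 1 by ring)
  simp only [smul_eq_mul] at h1 h2
  rw [e1] at h1
  rw [e2] at h2
  linarith

/-- `e^x - 1 ≤ x e^x` for `x ≥ 0`. -/
lemma exp_sub_one_le {x : ℝ} (hx : 0 ≤ x) : Real.exp x - 1 ≤ x * Real.exp x := by
  have h := Real.add_one_le_exp (-x)
  have h2 : Real.exp (-x) * Real.exp x = 1 := by
    rw [← Real.exp_add]; simp
  nlinarith [Real.exp_pos x]

/-- Corollary on differences of sub-Gaussian weights: with `G̃(s) = exp(β t (1+s)^α)`,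
for `0 < s⁻ ≤ s⁺` and `s = s⁻ + s⁺`,
`|G̃(s) - G̃(s⁺)| ≤ 2 α β t (1+s⁺)^α (1 - s⁺/s) G̃(s⁻)^{ε(α,s⁺/s⁻)} G̃(s⁺)`,
where `ε(α,u) = (1+u)^α - u^α`. -/
theorem weight_difference_bound (α β t sm sp : ℝ) (hα0 : 0 < α) (hα1 : α ≤ 1)
    (hβ : 0 < β) (ht : 0 ≤ t) (hsm : 0 < sm) (hle : sm ≤ sp) :
    |Real.exp (β * t * (1 + (sm + sp)) ^ α) - Real.exp (β * t * (1 + sp) ^ α)| ≤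
      2 * α * β * t * (1 + sp) ^ α * (1 - sp / (sm + sp)) *
        (Real.exp (β * t * (1 + sm) ^ α)) ^ ((1 + sp / sm) ^ α - (sp / sm) ^ α) *
        Real.exp (β * t * (1 + sp) ^ α) := by
  have hsp : (0:ℝ) < sp := lt_of_lt_of_le hsm hle
  have hs : (0:ℝ) < sm + sp := by linarith
  have hβt : 0 ≤ β * t := mul_nonneg hβ.le ht
  have h1sp : (0:ℝ) < 1 + sp := by linarith
  have h1s : (0:ℝ) < 1 + (sm + sp) := by linarith
  set A := β * t * (1 + (sm + sp)) ^ α with hA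
  set B := β * t * (1 + sp) ^ α with hB
  have hBA : B ≤ A :=
    mul_le_mul_of_nonneg_left (Real.rpow_le_rpow h1sp.le (by linarith) hα0.le) hβt
  rw [abs_of_nonneg (sub_nonneg.2 (Real.exp_le_exp.2 hBA))]
  set u := sp / sm with hu
  set ε := (1 + u) ^ α - u ^ α with hε
  set D := β * t * (1 + sm) ^ α * ε with hD
  have hu0 : 0 ≤ u := div_nonneg hsp.le hsm.le
  have hεnn : 0 ≤ ε := by
    have := Real.rpow_le_rpow hu0 (by linarith : u ≤ 1 + u) hα0.le
    simp only [hε]; linarith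
  -- sm^α * ε = (sm+sp)^α - sp^α
  have key1 : sm ^ α * (1 + u) ^ α = (sm + sp) ^ α := by
    rw [← Real.mul_rpow hsm.le (by linarith : (0:ℝ) ≤ 1 + u)]
    congr 1
    field_simp [hu]
    rw [hu, mul_add, mul_one, mul_div_cancel₀ _ hsm.ne']
  have key2 : sm ^ α * u ^ α = sp ^ α := by
    rw [← Real.mul_rpow hsm.le hu0]
    congr 1
    field_simp [hu]
    rw [hu, mul_div_cancel₀ _ hsm.ne']
  have hsmε : sm ^ α * ε = (sm + sp) ^ α - sp ^ α := by
    simp only [hε, mul_sub, key1, key2]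
  -- concavity difference: (1+s)^α - (1+sp)^α ≤ s^α - sp^α
  have hdiff : (1 + (sm + sp)) ^ α - (1 + sp) ^ α ≤ (sm + sp) ^ α - sp ^ α := by
    have h := rpow_diff_anti hα0.le hα1 hsp.le (by linarith : sp ≤ 1 + sp) hsm.le
    have e1 : (1 + sp) + sm = 1 + (sm + sp) := by ring
    have e2 : sp + sm = sm + sp := by ring
    rw [e1, e2] at h
    exact h
  -- A - B ≤ D
  have hABD : A - B ≤ D := by
    have hsm1 : sm ^ α ≤ (1 + sm) ^ α :=
      Real.rpow_le_rpow hsm.le (by linarith) hα0.le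
    have : (1 + (sm + sp)) ^ α - (1 + sp) ^ α ≤ (1 + sm) ^ α * ε := by
      calc (1 + (sm + sp)) ^ α - (1 + sp) ^ α ≤ (sm + sp) ^ α - sp ^ α := hdiff
        _ = sm ^ α * ε := hsmε.symm
        _ ≤ (1 + sm) ^ α * ε := mul_le_mul_of_nonneg_right hsm1 hεnn
    calc A - B = β * t * ((1 + (sm + sp)) ^ α - (1 + sp) ^ α) := by ring
      _ ≤ β * t * ((1 + sm) ^ α * ε) := mul_le_mul_of_nonneg_left this hβt
      _ = D := by rw [hD]; ring
  -- Bernoulli bound:  (1+s)^α - (1+sp)^α ≤ α (1+sp)^α * (sm/(1+sp))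
  have hbern : (1 + (sm + sp)) ^ α - (1 + sp) ^ α ≤ α * (1 + sp) ^ α * (sm / (1 + sp)) := by
    have hq : 0 ≤ sm / (1 + sp) := div_nonneg hsm.le h1sp.le
    have hfac : 1 + (sm + sp) = (1 + sp) * (1 + sm / (1 + sp)) := by
      rw [mul_add, mul_one, mul_div_cancel₀ _ h1sp.ne']; ring
    have hb := rpow_one_add_le_one_add_mul_self (by linarith : (-1:ℝ) ≤ sm / (1 + sp))
      hα0.le hα1
    have hmul : (1 + (sm + sp)) ^ α = (1 + sp) ^ α * (1 + sm / (1 + sp)) ^ α := by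
      rw [hfac, Real.mul_rpow h1sp.le (by linarith)]
    have hpow : 0 ≤ (1 + sp) ^ α := Real.rpow_nonneg h1sp.le α
    calc (1 + (sm + sp)) ^ α - (1 + sp) ^ α
        = (1 + sp) ^ α * ((1 + sm / (1 + sp)) ^ α - 1) := by rw [hmul]; ring
      _ ≤ (1 + sp) ^ α * (α * (sm / (1 + sp))) := by
          apply mul_le_mul_of_nonneg_left _ hpow
          linarith
      _ = α * (1 + sp) ^ α * (sm / (1 + sp)) := by ring
  -- sm/(1+sp) ≤ 2 sm/(sm+sp)
  have hsm2s : sm / (1 + sp) ≤ 2 * (sm / (sm + sp)) := by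
    have h2 : 2 * (sm / (sm + sp)) = (2 * sm) / (sm + sp) := by ring
    rw [h2, div_le_div_iff₀ h1sp hs]
    nlinarith
  -- A - B ≤ M := 2 α β t (1+sp)^α (sm/(sm+sp))
  set M := 2 * α * β * t * (1 + sp) ^ α * (sm / (sm + sp)) with hM
  have hpow : 0 ≤ (1 + sp) ^ α := Real.rpow_nonneg h1sp.le α
  have hABM : A - B ≤ M := by
    calc A - B = β * t * ((1 + (sm + sp)) ^ α - (1 + sp) ^ α) := by ring
      _ ≤ β * t * (α * (1 + sp) ^ α * (sm / (1 + sp))) := mul_le_mul_of_nonneg_left hbern hβt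
      _ ≤ β * t * (α * (1 + sp) ^ α * (2 * (sm / (sm + sp)))) := by
          apply mul_le_mul_of_nonneg_left _ hβt
          apply mul_le_mul_of_nonneg_left hsm2s
          positivity
      _ = M := by rw [hM]; ring
  -- exp of D as rpow
  have hexpD : (Real.exp (β * t * (1 + sm) ^ α)) ^ ε = Real.exp D := by
    rw [Real.rpow_def_of_pos (Real.exp_pos _), Real.log_exp, hD]
  -- rewrite 1 - sp/(sm+sp) = sm/(sm+sp)
  have hone : 1 - sp / (sm + sp) = sm / (sm + sp) := by
    field_simp
    ring
  rw [hone, hexpD]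
  -- final chain
  have hAB0 : 0 ≤ A - B := sub_nonneg.2 hBA
  have hexpB : 0 < Real.exp B := Real.exp_pos B
  have h1 : Real.exp A - Real.exp B = Real.exp B * (Real.exp (A - B) - 1) := by
    rw [mul_sub, mul_one, ← Real.exp_add]; ring_nf
  rw [h1]
  have h2 : Real.exp (A - B) - 1 ≤ (A - B) * Real.exp (A - B) := exp_sub_one_le hAB0
  have h3 : Real.exp (A - B) ≤ Real.exp D := Real.exp_le_exp.2 hABD
  have hM0 : 0 ≤ M := by positivity
  calc Real.exp B * (Real.exp (A - B) - 1)
      ≤ Real.exp B * ((A - B) * Real.exp (A - B)) :=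
        mul_le_mul_of_nonneg_left h2 hexpB.le
    _ ≤ Real.exp B * (M * Real.exp D) := by
        apply mul_le_mul_of_nonneg_left _ hexpB.le
        exact mul_le_mul hABM h3 (Real.exp_pos _).le hM0
    _ = 2 * α * β * t * (1 + sp) ^ α * (sm / (sm + sp)) * Real.exp D * Real.exp B := by
        rw [hM]; ring
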